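/- Let X be a finite poset and f : K(X) → X the projection from the order complex. Then the unit η : id → f_* f* of the adjunction f* ⊣ f_* (inverse image left adjoint to direct image of sheaves on posets) is a natural isomorphism. -/

import Mathlib

open CategoryTheory

/-- The order complex of a poset `X`: nonempty finite totally ordered subsets
(chains) of `X`, viewed as a poset under the face (inclusion) relation. -/
def OrderCx (X : Type) [PartialOrder X] : Type :=
  {s : Finset X // s.Nonempty ∧ IsChain (· ≤ ·) (s : Set X)}

instance (X : Type) [PartialOrder X] : PartialOrder (OrderCx X) :=
  inferInstanceAs (PartialOrder {s : Finset X // s.Nonempty ∧ IsChain (· ≤ ·) (s : Set X)})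

/-- A nonempty finite chain has a maximum. -/
lemma OrderCx.exists_max (X : Type) [PartialOrder X] (s : OrderCx X) :
    ∃ m ∈ s.1, ∀ x ∈ s.1, x ≤ m := by
  obtain ⟨m, hm, hmax⟩ := s.1.exists_maximal s.2.1
  refine ⟨m, hm, fun x hx => ?_⟩
  rcases eq_or_ne x m with rfl | hne
  · exact le_rfl
  · rcases s.2.2 hx hm hne with h | h
    · exact h
    · exact hmax hx h

/-- The projection `f : K(X) → X` sending a chain `x_0 < ... < x_k` to its maximum. -/
noncomputable def chainMax (X : Type) [PartialOrder X] (s : OrderCx X) : X :=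
  (OrderCx.exists_max X s).choose

lemma chainMax_mem (X : Type) [PartialOrder X] (s : OrderCx X) : chainMax X s ∈ s.1 :=
  (OrderCx.exists_max X s).choose_spec.1

lemma le_chainMax (X : Type) [PartialOrder X] (s : OrderCx X) :
    ∀ x ∈ s.1, x ≤ chainMax X s :=
  (OrderCx.exists_max X s).choose_spec.2

/-- The projection is order preserving (faces map to smaller-or-equal elements). -/
lemma chainMax_monotone (X : Type) [PartialOrder X] : Monotone (chainMax X) := by
  intro s t h
  exact le_chainMax X t _ (Finset.le_iff_subset.mp h (chainMax_mem X s))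

/-- The pullback functor `f* : Shv(X, C) → Shv(K(X), C)` along the projection
`f : K(X) → X`, given by `(f*F)(x_•) = F(max x_•)` (precomposition with `f`). -/
noncomputable def pullbackOrderCx (X : Type) [PartialOrder X]
    (C : Type*) [Category C] : (X ⥤ C) ⥤ (OrderCx X ⥤ C) :=
  (Functor.whiskeringLeft (OrderCx X) X C).obj (chainMax_monotone X).functor


section Aux

variable {X : Type} [PartialOrder X]

def OrderCx.sing (x : X) : OrderCx X :=
  ⟨{x}, ⟨x, Finset.mem_singleton_self x⟩, by
    simpa using Set.subsingleton_singleton.isChain⟩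

lemma chainMax_sing (x : X) : chainMax X (OrderCx.sing x) = x :=
  Finset.mem_singleton.mp (chainMax_mem X (OrderCx.sing x))

open scoped Classical in
noncomputable def OrderCx.pair {x y : X} (h : x ≤ y) : OrderCx X :=
  ⟨{x, y}, ⟨x, by simp⟩, by
    intro a ha b hb hne
    simp only [Finset.coe_insert, Finset.coe_singleton, Set.mem_insert_iff,
      Set.mem_singleton_iff] at ha hb
    rcases ha with rfl | rfl <;> rcases hb with rfl | rfl <;> simp_all⟩

open scoped Classical in
lemma chainMax_pair {x y : X} (h : x ≤ y) : chainMax X (OrderCx.pair h) = y := by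
  have h1 : chainMax X (OrderCx.pair h) ∈ (OrderCx.pair h).1 := chainMax_mem X _
  have h2 : y ≤ chainMax X (OrderCx.pair h) := le_chainMax X _ y (by simp [OrderCx.pair])
  simp only [OrderCx.pair, Finset.mem_insert, Finset.mem_singleton] at h1
  rcases h1 with h1 | h1
  · exact le_antisymm (h1.le.trans h) h2
  · exact le_antisymm (le_of_eq h1) h2

lemma sing_le_self (s : OrderCx X) : OrderCx.sing (chainMax X s) ≤ s := by
  change ({chainMax X s} : Finset X) ≤ s.1
  simpa [Finset.le_iff_subset] using chainMax_mem X s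

open scoped Classical in
lemma sing_le_pair_left {x y : X} (h : x ≤ y) : OrderCx.sing x ≤ OrderCx.pair h := by
  change ({x} : Finset X) ≤ _
  simp [Finset.le_iff_subset, OrderCx.pair]

open scoped Classical in
lemma sing_le_pair_right {x y : X} (h : x ≤ y) : OrderCx.sing y ≤ OrderCx.pair h := by
  change ({y} : Finset X) ≤ _
  simp [Finset.le_iff_subset, OrderCx.pair]

lemma map_hom_self {C : Type*} [Category C] (F : X ⥤ C) {a : X} (f : a ⟶ a) :
    F.map f = 𝟙 _ := by
  rw [show f = 𝟙 a from Subsingleton.elim _ _, F.map_id]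

noncomputable def pullbackOrderCxFF (C : Type*) [Category C] :
    (pullbackOrderCx X C).FullyFaithful where
  preimage {F G} α :=
    { app := fun x =>
        F.map (homOfLE (le_chainMax X (OrderCx.sing x) x
          (show x ∈ (OrderCx.sing x).1 from Finset.mem_singleton_self x))) ≫
          α.app (OrderCx.sing x) ≫ G.map (homOfLE (le_of_eq (chainMax_sing x)))
      naturality := by
        intro x y h
        have hxy : x ≤ y := leOfHom h
        have nu := α.naturality (homOfLE (sing_le_pair_left hxy))
        have nv := α.naturality (homOfLE (sing_le_pair_right hxy))
        simp only [Functor.comp_map, pullbackOrderCx, Functor.whiskeringLeft,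
          Monotone.functor] at nu nv ⊢
        have d : chainMax X (OrderCx.pair hxy) ≤ y := le_of_eq (chainMax_pair hxy)
        have e1 : (homOfLE (le_of_eq (chainMax_sing y)) :
              chainMax X (OrderCx.sing y) ⟶ y)
            = homOfLE (chainMax_monotone X (sing_le_pair_right hxy)) ≫ homOfLE d := rfl
        have e2 : (homOfLE (le_of_eq (chainMax_sing x)) :
              chainMax X (OrderCx.sing x) ⟶ x) ≫ h
            = homOfLE (chainMax_monotone X (sing_le_pair_left hxy)) ≫ homOfLE d := rfl
        rw [e1, G.map_comp]
        simp only [Category.assoc, ← reassoc_of% nv]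
        rw [← G.map_comp, e2, G.map_comp]
        simp only [← reassoc_of% nu]
        simp only [← Category.assoc, ← F.map_comp]
        rfl }
  map_preimage := by
    intro F G α
    ext s
    simp only [pullbackOrderCx, Functor.whiskeringLeft, Monotone.functor, Functor.comp_obj,
      Functor.comp_map, Functor.whiskerLeft_app]
    have nu := α.naturality (homOfLE (sing_le_self s))
    simp only [Functor.comp_map, pullbackOrderCx, Functor.whiskeringLeft, Monotone.functor] at nu
    rw [← nu, ← Category.assoc, ← F.map_comp, map_hom_self, Category.id_comp]
  preimage_map := by
    intro F G β
    ext x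
    simp only [pullbackOrderCx, Functor.whiskeringLeft, Monotone.functor, Functor.comp_obj,
      Functor.comp_map, Functor.whiskerLeft_app]
    have nb := β.naturality (homOfLE (le_of_eq (chainMax_sing x)))
    rw [← nb, ← Category.assoc, ← F.map_comp, map_hom_self, Category.id_comp]


end Aux

/-- For a finite poset `X` with order complex projection
`f : K(X) → X`, the unit `η : id → f_* f*` of the adjunction `f* ⊣ f_*`
(inverse image left adjoint to direct image of sheaves valued in `vec`) is a
natural isomorphism.  (The direct image `f_*` is any right adjoint of `f*`.) -/
theorem unit_pullback_orderCx_isIso (k : Type) [Field k]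
    (X : Type) [PartialOrder X] [Fintype X]
    (fStar : (OrderCx X ⥤ FGModuleCat k) ⥤ (X ⥤ FGModuleCat k))
    (adj : pullbackOrderCx X (FGModuleCat k) ⊣ fStar) :
    IsIso adj.unit := by
  haveI : (pullbackOrderCx X (FGModuleCat k)).Full := (pullbackOrderCxFF _).full
  haveI : (pullbackOrderCx X (FGModuleCat k)).Faithful := (pullbackOrderCxFF _).faithful
  exact adj.unit_isIso_of_L_fully_faithful
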